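/- Let alpha in F_{q^4} with F_{q^4} = F_q(alpha). The number of 2-dimensional alpha-splitting F_q-subspaces of F_{q^4} equals [4 choose 2]_q - [2 choose 1]_q = q^2 (q^4-1)/(q^2-1). -/

import Mathlib

open Pointwise

/-- `W` is an `α`-splitting subspace: the whole space is the internal direct sum
`W ⊕ αW ⊕ ⋯ ⊕ α^(n-1)W`. -/
def IsSplitting {F E : Type*} [Field F] [Field E] [Algebra F E]
    (n : ℕ) (α : E) (W : Submodule F E) : Prop :=
  DirectSum.IsInternal (fun i : Fin n => α ^ (i : ℕ) • W)

section Aux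

set_option linter.unusedSectionVars false
set_option maxHeartbeats 1000000

variable {F E : Type*} [Field F] [Fintype F] [Field E] [Algebra F E]

private lemma sigma_eq2 {β : Type*} {Q : Submodule F E → Prop} (T : Submodule F E → β → Prop)
    (W W' : {W : Submodule F E // Q W}) (v : {x : β // T W.1 x}) (v' : {x : β // T W'.1 x})
    (h : W = W') (h2 : v.1 = v'.1) :
    (⟨W, v⟩ : Σ W : {W : Submodule F E // Q W}, {x : β // T W.1 x}) = ⟨W', v'⟩ := by
  subst h
  exact congrArg _ (Subtype.ext h2)

private lemma sigma_eq {k : ℕ} {Q : Submodule F E → Prop}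
    (W W' : {W : Submodule F E // Q W})
    (t : {t : Fin k → W.1 // LinearIndependent F t})
    (t' : {t : Fin k → W'.1 // LinearIndependent F t})
    (h : W = W') (h2 : ∀ i, ((t.1 i : E)) = (t'.1 i : E)) :
    (⟨W, t⟩ : Σ W : {W : Submodule F E // Q W}, {t : Fin k → W.1 // LinearIndependent F t})
      = ⟨W', t'⟩ := by
  subst h
  exact congrArg _ (Subtype.ext (funext fun i => Subtype.ext (h2 i)))

lemma fib [FiniteDimensional F E] (k : ℕ) (P : Submodule F E → Prop) :
    Nat.card {s : Fin k → E // LinearIndependent F s ∧ P (Submodule.span F (Set.range s))} =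
      Nat.card {W : Submodule F E // Module.finrank F W = k ∧ P W} *
        ∏ i : Fin k, (Fintype.card F ^ k - Fintype.card F ^ i.val) := by
  classical
  have : Finite E := Module.finite_of_finite F
  have span_eq : ∀ (W : {W : Submodule F E // Module.finrank F W = k ∧ P W})
      (t : {t : Fin k → W.1 // LinearIndependent F t}),
      Submodule.span F (Set.range fun i => (t.1 i : E)) = W.1 := by
    intro W t
    refine Submodule.eq_of_le_of_finrank_eq ?_ ?_
    · rw [Submodule.span_le]
      rintro x ⟨i, rfl⟩; exact (t.1 i).2
    · exact (finrank_span_eq_card (t.2.map' W.1.subtype (Submodule.ker_subtype _))).trans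
        (by rw [Fintype.card_fin, W.2.1])
  have e : {s : Fin k → E // LinearIndependent F s ∧ P (Submodule.span F (Set.range s))} ≃
      Σ W : {W : Submodule F E // Module.finrank F W = k ∧ P W},
        {t : Fin k → W.1 // LinearIndependent F t} :=
    { toFun := fun s => ⟨⟨Submodule.span F (Set.range s.1),
        by simpa using finrank_span_eq_card s.2.1, s.2.2⟩,
        ⟨fun i => ⟨s.1 i, Submodule.subset_span (Set.mem_range_self i)⟩,
          LinearIndependent.of_comp (Submodule.span F (Set.range s.1)).subtype s.2.1⟩⟩
      invFun := fun p => ⟨fun i => (p.2.1 i : E),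
        p.2.2.map' p.1.1.subtype (Submodule.ker_subtype _), by rw [span_eq p.1 p.2]; exact p.1.2.2⟩
      left_inv := fun s => rfl
      right_inv := fun p => sigma_eq _ _ _ _ (Subtype.ext (span_eq p.1 p.2)) (fun i => rfl) }
  have hcard : ∀ (W : {W : Submodule F E // Module.finrank F W = k ∧ P W}),
      Nat.card {t : Fin k → W.1 // LinearIndependent F t} =
        ∏ i : Fin k, (Fintype.card F ^ k - Fintype.card F ^ i.val) := by
    intro W
    rw [card_linearIndependent (by rw [W.2.1]), W.2.1]
  have := Fintype.ofFinite E
  simp only [Nat.card_eq_fintype_card] at *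
  rw [Fintype.card_congr e, Fintype.card_sigma]
  simp [hcard]

lemma mem_smul_iff {a : E} {S : Submodule F E} {x : E} : x ∈ a • S ↔ ∃ y ∈ S, a * y = x := by
  rw [← SetLike.mem_coe, Submodule.coe_pointwise_smul]
  simp [Set.mem_smul_set, smul_eq_mul]

lemma deg_le_two {α x : E} (hdim : Module.finrank F E = 4)
    (hα : Algebra.adjoin F {α} = ⊤)
    (hx : x * x ∈ Submodule.span F {1, x}) (hxa : α ∈ Submodule.span F {1, x}) : False := by
  classical
  have hmul : ∀ y z : E, y ∈ Submodule.span F ({1, x} : Set E) →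
      z ∈ Submodule.span F ({1, x} : Set E) → y * z ∈ Submodule.span F ({1, x} : Set E) := by
    intro y z hy hz
    obtain ⟨a, b, rfl⟩ := Submodule.mem_span_pair.mp hy
    obtain ⟨c, d, rfl⟩ := Submodule.mem_span_pair.mp hz
    have h1 : (1 : E) ∈ Submodule.span F ({1, x} : Set E) :=
      Submodule.subset_span (by simp)
    have h2 : x ∈ Submodule.span F ({1, x} : Set E) :=
      Submodule.subset_span (by simp)
    have heq : (a • (1:E) + b • x) * (c • (1:E) + d • x)
        = (a*c) • (1:E) + ((a*d)•x + ((b*c)•x + (b*d) • (x*x))) := by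
      simp only [smul_smul, mul_smul_comm, smul_mul_assoc, mul_add, add_mul, mul_one, one_mul]
      module
    rw [heq]
    exact Submodule.add_mem _ (Submodule.smul_mem _ _ h1) (Submodule.add_mem _
      (Submodule.smul_mem _ _ h2) (Submodule.add_mem _ (Submodule.smul_mem _ _ h2)
        (Submodule.smul_mem _ _ hx)))
  set T := Submodule.span F ({1, x} : Set E)
  have h1 : (1 : E) ∈ T := Submodule.subset_span (by simp)
  let S : Subalgebra F E := T.toSubalgebra h1 hmul
  have hS : S = ⊤ := top_le_iff.mp (hα ▸ Algebra.adjoin_le (by simpa [S] using hxa))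
  have hT : T = ⊤ := by
    have := congrArg Subalgebra.toSubmodule hS
    rwa [Submodule.toSubalgebra_toSubmodule, Algebra.top_toSubmodule] at this
  have h4 : Module.finrank F E = Module.finrank F T := by rw [hT]; exact (finrank_top F E).symm
  have hle : Module.finrank F T ≤ 2 := by
    have hcoe : ((({1, x} : Finset E) : Set E)) = ({1, x} : Set E) := by simp
    calc Module.finrank F T = Set.finrank F (({1, x} : Finset E) : Set E) := by
          rw [hcoe]; rfl
      _ ≤ ({1, x} : Finset E).card := finrank_span_finset_le_card _
      _ ≤ 2 := (Finset.card_insert_le _ _).trans (by simp)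
  omega
variable {α : E} (hdim : Module.finrank F E = 4) (hα : Algebra.adjoin F {α} = ⊤)

include hdim hα in
lemma alg_ne (c : F) : algebraMap F E c ≠ α := by
  intro hc
  have : Algebra.adjoin F {α} ≤ ⊥ :=
    Algebra.adjoin_le (by simp only [Set.singleton_subset_iff, Algebra.mem_bot]; exact ⟨c, hc⟩)
  have hbot : (⊥ : Subalgebra F E) = ⊤ := top_le_iff.mp (hα ▸ this)
  have := Subalgebra.bot_eq_top_iff_finrank_eq_one.mp hbot
  omega

include hdim hα in
lemma comb_eq_zero {a b : F} (h : a • (1:E) + b • α = 0) : a = 0 ∧ b = 0 := by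
  by_cases hb : b = 0
  · subst hb
    simp only [zero_smul, add_zero, smul_eq_zero, one_ne_zero, or_false] at h
    exact ⟨h, rfl⟩
  · exfalso
    apply alg_ne hdim hα (-(b⁻¹ * a))
    rw [Algebra.algebraMap_eq_smul_one]
    have hba : b • α = -(a • (1:E)) := by linear_combination (norm := module) h
    calc ((-(b⁻¹ * a)) • (1:E)) = b⁻¹ • (-(a • (1:E))) := by
          rw [smul_neg, smul_smul, neg_smul]
      _ = b⁻¹ • (b • α) := by rw [hba]
      _ = α := by rw [smul_smul, inv_mul_cancel₀ hb, one_smul]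

include hdim hα in
lemma alpha_ne_zero : α ≠ 0 := fun h => alg_ne hdim hα 0 (by rw [h, map_zero])

include hdim hα in
lemma indep_pair {y : E} (hy : y ≠ 0) : LinearIndependent F ![y, α * y] := by
  rw [linearIndependent_fin2]
  constructor
  · simp only [Matrix.cons_val_one, Matrix.head_cons]
    exact mul_ne_zero (alpha_ne_zero hdim hα) hy
  · intro a ha
    simp only [Matrix.cons_val_one, Matrix.head_cons, Matrix.cons_val_zero] at ha
    -- a • (α * y) = y  →  (a • α - 1) * y = 0 → a • α = 1... derive contradiction
    have h1 : ((-1 : F) • (1:E) + a • α) * y = 0 := by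
      rw [add_mul, smul_mul_assoc, smul_mul_assoc, one_mul, ha]
      module
    have h2 : (-1 : F) • (1:E) + a • α = 0 := by
      rcases mul_eq_zero.mp h1 with h | h
      · exact h
      · exact absurd h hy
    have := (comb_eq_zero hdim hα h2).1
    norm_num at this

include hdim hα in
lemma indep_one_alpha : LinearIndependent F ![(1:E), α] := by
  have := indep_pair hdim hα (one_ne_zero (α := E))
  simpa [mul_one] using this

lemma smul_L (w : E) : w • Submodule.span F ({1, α} : Set E)
    = Submodule.span F ({w, w * α} : Set E) := by
  rw [Submodule.smul_span]
  congr 1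
  simp [Set.smul_set_insert, Set.smul_set_singleton, smul_eq_mul, mul_one]

include hdim hα in
lemma finrank_L : Module.finrank F (Submodule.span F ({1, α} : Set E)) = 2 := by
  have h : ({1, α} : Set E) = Set.range ![(1:E), α] := by
    rw [show Set.range ![(1:E), α] = {1, α} by
      ext z; simp [Fin.exists_fin_two]; tauto]
  rw [h]
  have := finrank_span_eq_card (indep_one_alpha hdim hα)
  simpa using this

-- w • W as a map
lemma smul_eq_map (w : E) (hw : w ≠ 0) (W : Submodule F E) :
    Module.finrank F (w • W : Submodule F E) = Module.finrank F W := by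
  let e : E ≃ₗ[F] E :=
    LinearEquiv.ofLinear (LinearMap.mulLeft F w) (LinearMap.mulLeft F w⁻¹)
      (by ext x; simp [← mul_assoc, mul_inv_cancel₀ hw])
      (by ext x; simp [← mul_assoc, inv_mul_cancel₀ hw])
  have hmap : w • W = W.map (e.toLinearMap) := by
    ext x
    rw [mem_smul_iff, Submodule.mem_map]
    constructor
    · rintro ⟨y, hy, rfl⟩; exact ⟨y, hy, rfl⟩
    · rintro ⟨y, hy, rfl⟩; exact ⟨y, hy, rfl⟩
  rw [hmap, LinearEquiv.finrank_map_eq e W]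

include hdim hα in
lemma multiplier {x : E} (hx : ∀ y ∈ Submodule.span F ({1, α} : Set E),
    x * y ∈ Submodule.span F ({1, α} : Set E)) : ∃ c : F, algebraMap F E c = x := by
  by_contra h
  push_neg at h
  have h1L : (1:E) ∈ Submodule.span F ({1, α} : Set E) := Submodule.subset_span (by simp)
  have hαL : α ∈ Submodule.span F ({1, α} : Set E) := Submodule.subset_span (by simp)
  have hxL : x ∈ Submodule.span F ({1, α} : Set E) := by simpa using hx 1 h1L
  obtain ⟨a, b, hab⟩ := Submodule.mem_span_pair.mp hxL
  have hb : b ≠ 0 := by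
    rintro rfl
    exact h a (by rw [Algebra.algebraMap_eq_smul_one]; simpa using hab)
  have h1x : (1:E) ∈ Submodule.span F ({1, x} : Set E) := Submodule.subset_span (by simp)
  have hxx : x ∈ Submodule.span F ({1, x} : Set E) := Submodule.subset_span (by simp)
  have hαx : α ∈ Submodule.span F ({1, x} : Set E) := by
    rw [Submodule.mem_span_pair]
    refine ⟨-(b⁻¹ * a), b⁻¹, ?_⟩
    rw [← hab]
    rw [smul_add, smul_smul, smul_smul, inv_mul_cancel₀ hb, one_smul]
    module
  have hLx : Submodule.span F ({1, α} : Set E) ≤ Submodule.span F ({1, x} : Set E) := by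
    rw [Submodule.span_le]
    rintro z hz
    simp only [Set.mem_insert_iff, Set.mem_singleton_iff] at hz
    rcases hz with rfl | rfl
    · exact h1x
    · exact hαx
  exact deg_le_two hdim hα (hLx (hx x hxL)) hαx

lemma algebraMap_smul_submodule {c : F} (hc : c ≠ 0) (W : Submodule F E) :
    (algebraMap F E c) • W = W := by
  ext x
  rw [mem_smul_iff]
  constructor
  · rintro ⟨y, hy, rfl⟩
    rw [← Algebra.smul_def]
    exact W.smul_mem c hy
  · intro hxW
    exact ⟨c⁻¹ • x, W.smul_mem _ hxW, by rw [← Algebra.smul_def, smul_smul,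
      mul_inv_cancel₀ hc, one_smul]⟩


include hdim hα in
lemma splitting_iff {W : Submodule F E} (hW : Module.finrank F W = 2) :
    IsSplitting 2 α W ↔ W ⊓ (α • W) = ⊥ := by
  have : FiniteDimensional F E := Module.finite_of_finrank_pos (by omega)
  have huniv : (Set.univ : Set (Fin 2)) = {0, 1} := by ext i; fin_cases i <;> simp
  have h01 : (0 : Fin 2) ≠ 1 := by decide
  rw [IsSplitting, DirectSum.isInternal_submodule_iff_isCompl _ h01 huniv]
  simp only [Fin.isValue, Fin.val_zero, Fin.val_one, pow_zero, pow_one, one_smul]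
  constructor
  · intro h
    exact disjoint_iff.mp h.disjoint
  · intro h
    refine ⟨disjoint_iff.mpr h, codisjoint_iff.mpr ?_⟩
    apply Submodule.eq_top_of_finrank_eq
    have hsum := Submodule.finrank_sup_add_finrank_inf_eq W (α • W)
    rw [h, finrank_bot, add_zero, hW] at hsum
    rw [smul_eq_map α (alpha_ne_zero hdim hα) W, hW] at hsum
    omega

include hdim hα in
lemma rank_smul_L {w : E} (hw : w ≠ 0) :
    Module.finrank F (w • Submodule.span F ({1, α} : Set E) : Submodule F E) = 2 := by
  rw [smul_eq_map w hw, finrank_L hdim hα]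

include hdim hα in
lemma nonsplit_iff {W : Submodule F E} (hW : Module.finrank F W = 2) :
    ¬ IsSplitting 2 α W ↔
      ∃ w : E, w ≠ 0 ∧ W = w • Submodule.span F ({1, α} : Set E) := by
  have : FiniteDimensional F E := Module.finite_of_finrank_pos (by omega)
  rw [splitting_iff hdim hα hW]
  constructor
  · intro h
    obtain ⟨x, hx, hx0⟩ := Submodule.exists_mem_ne_zero_of_ne_bot h
    obtain ⟨hxW, hxαW⟩ := Submodule.mem_inf.mp hx
    obtain ⟨y, hyW, hyx⟩ := mem_smul_iff.mp hxαW
    have hy0 : y ≠ 0 := by rintro rfl; rw [mul_zero] at hyx; exact hx0 hyx.symm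
    refine ⟨y, hy0, ?_⟩
    rw [smul_L]
    have hset : ({y, y * α} : Set E) = Set.range ![y, α * y] := by
      ext z; simp [Fin.exists_fin_two, mul_comm]; tauto
    symm
    apply Submodule.eq_of_le_of_finrank_eq
    · rw [Submodule.span_le]
      rintro z hz
      simp only [Set.mem_insert_iff, Set.mem_singleton_iff] at hz
      rcases hz with rfl | rfl
      · exact hyW
      · rw [mul_comm, hyx]; exact hxW
    · rw [hset]
      have h2 := finrank_span_eq_card (indep_pair hdim hα hy0)
      simp only [Fintype.card_fin] at h2
      rw [hW]
      exact h2.trans (by norm_num)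
  · rintro ⟨w, hw0, rfl⟩
    set L := Submodule.span F ({1, α} : Set E) with hL
    intro hbot
    have hw_mem : w ∈ w • L :=
      mem_smul_iff.mpr ⟨1, Submodule.subset_span (by simp), mul_one w⟩
    have h1 : w * α ∈ w • L := by
      rw [smul_L]; exact Submodule.subset_span (by simp)
    have h2 : w * α ∈ α • (w • L) :=
      mem_smul_iff.mpr ⟨w, hw_mem, mul_comm α w⟩
    have : w * α ∈ (⊥ : Submodule F E) := hbot ▸ Submodule.mem_inf.mpr ⟨h1, h2⟩
    rw [Submodule.mem_bot] at this
    exact mul_ne_zero hw0 (alpha_ne_zero hdim hα) this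

include hdim hα in
lemma smul_L_cancel {v w : E} (hv : v ≠ 0) (hw : w ≠ 0)
    (h : v • Submodule.span F ({1, α} : Set E) = w • Submodule.span F ({1, α} : Set E)) :
    ∃ c : F, c ≠ 0 ∧ v = c • w := by
  set L := Submodule.span F ({1, α} : Set E) with hL
  have hu : (w⁻¹ * v) • L = L := by
    rw [mul_smul, h, ← mul_smul, inv_mul_cancel₀ hw, one_smul]
  obtain ⟨c, hc⟩ := multiplier hdim hα (x := w⁻¹ * v) (fun y hy => by
    have := Submodule.smul_mem_pointwise_smul y (w⁻¹ * v) L hy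
    rwa [hu, smul_eq_mul] at this)
  refine ⟨c, ?_, ?_⟩
  · rintro rfl
    rw [map_zero] at hc
    exact hv (by field_simp at hc; simpa using hc.symm)
  · rw [Algebra.smul_def, hc]
    field_simp

include hdim hα in
lemma NS_card :
    Nat.card {W : Submodule F E // Module.finrank F W = 2 ∧ ¬ IsSplitting 2 α W} *
      (Fintype.card F - 1) = Fintype.card F ^ 4 - 1 := by
  classical
  have hfd : FiniteDimensional F E := Module.finite_of_finrank_pos (by omega)
  have hfin : Finite E := Module.finite_of_finite F
  have := Fintype.ofFinite E
  set L := Submodule.span F ({1, α} : Set E) with hLdef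
  set NS := {W : Submodule F E // Module.finrank F W = 2 ∧ ¬ IsSplitting 2 α W} with hNS
  have e : {v : E // v ≠ 0} ≃ Σ W : NS, {v : E // v ≠ 0 ∧ v • L = W.1} :=
    { toFun := fun v => ⟨⟨v.1 • L, rank_smul_L hdim hα v.2,
        (nonsplit_iff hdim hα (rank_smul_L hdim hα v.2)).mpr ⟨v.1, v.2, rfl⟩⟩,
        ⟨v.1, v.2, rfl⟩⟩
      invFun := fun p => ⟨p.2.1, p.2.2.1⟩
      left_inv := fun v => rfl
      right_inv := by
        rintro ⟨⟨W, hW⟩, ⟨v, hv, hvW⟩⟩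
        exact sigma_eq2 (fun W x => x ≠ 0 ∧ x • L = W) _ _ _ _ (Subtype.ext hvW) rfl }
  have fiber_card : ∀ W : NS, Nat.card {v : E // v ≠ 0 ∧ v • L = W.1} =
      Fintype.card F - 1 := by
    intro W
    obtain ⟨w0, hw0, hw0L⟩ := (nonsplit_iff hdim hα W.2.1).mp W.2.2
    let f : {c : F // c ≠ 0} → {v : E // v ≠ 0 ∧ v • L = W.1} := fun c =>
      ⟨c.1 • w0, smul_ne_zero c.2 hw0, by
        rw [Algebra.smul_def, mul_smul, algebraMap_smul_submodule c.2, ← hw0L]⟩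
    have hbij : Function.Bijective f := by
      constructor
      · intro c c' hcc
        have := congrArg Subtype.val hcc
        exact Subtype.ext (smul_left_injective F hw0 (by exact this))
      · rintro ⟨v, hv, hvL⟩
        obtain ⟨c, hc, hvc⟩ := smul_L_cancel hdim hα hv hw0 (by rw [hvL, hw0L])
        exact ⟨⟨c, hc⟩, Subtype.ext hvc.symm⟩
    rw [← Nat.card_eq_of_bijective f hbij, Nat.card_congr unitsEquivNeZero.symm,
      Nat.card_units, Nat.card_eq_fintype_card]
  have hleft : Nat.card {v : E // v ≠ 0} = Fintype.card F ^ 4 - 1 := by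
    rw [Nat.card_congr unitsEquivNeZero.symm, Nat.card_units, Nat.card_eq_fintype_card,
      Module.card_eq_pow_finrank (K := F) (V := E), hdim]
  rw [← hleft, Nat.card_congr e]
  simp only [Nat.card_eq_fintype_card] at fiber_card ⊢
  rw [Fintype.card_sigma]
  simp [fiber_card, mul_comm]


end Aux

set_option maxHeartbeats 1000000 in
theorem stmt10 (F E : Type*) [Field F] [Fintype F] [Field E] [Algebra F E]
    (q : ℕ) (hq : q = Fintype.card F) (hdim : Module.finrank F E = 4)
    (α : E) (hα : Algebra.adjoin F {α} = ⊤) :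
    Nat.card {W : Submodule F E // Module.finrank F W = 2 ∧ IsSplitting 2 α W} =
      q ^ 2 * ((q ^ 4 - 1) / (q ^ 2 - 1)) := by
  classical
  subst hq
  set q := Fintype.card F with hqdef
  have hfd : FiniteDimensional F E := Module.finite_of_finrank_pos (by omega)
  have hfin : Finite E := Module.finite_of_finite F
  have := Fintype.ofFinite E
  have hq2 : 2 ≤ q := Fintype.one_lt_card
  -- basic inequalities
  have e1 : 1 ≤ q := by omega
  have e2 : 1 ≤ q ^ 2 := Nat.one_le_pow _ _ (by omega)
  have e4 : 1 ≤ q ^ 4 := Nat.one_le_pow _ _ (by omega)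
  have eq2 : q ≤ q ^ 2 := by nlinarith
  have eq4 : q ≤ q ^ 4 := by nlinarith
  have e22 : 4 ≤ q ^ 2 := by nlinarith
  have eq2' : q < q ^ 2 := by nlinarith
  have eq4' : q < q ^ 4 := by nlinarith
  -- the two fibration equations
  have h1 := fib (F := F) (E := E) 2 (IsSplitting 2 α)
  have h2 := fib (F := F) (E := E) 2 (fun W => ¬ IsSplitting 2 α W)
  have hprod : ∏ i : Fin 2, (q ^ 2 - q ^ i.val) = (q ^ 2 - 1) * (q ^ 2 - q) := by
    rw [Fin.prod_univ_two]
    norm_num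
  rw [hprod] at h1 h2
  -- total count of independent pairs
  have htot : Nat.card {s : Fin 2 → E // LinearIndependent F s} =
      (q ^ 4 - 1) * (q ^ 4 - q) := by
    rw [card_linearIndependent (by omega : 2 ≤ Module.finrank F E)]
    rw [Fin.prod_univ_two, hdim]
    norm_num
    rfl
  -- partition
  have hpart : Nat.card {s : Fin 2 → E // LinearIndependent F s ∧
        IsSplitting 2 α (Submodule.span F (Set.range s))} +
      Nat.card {s : Fin 2 → E // LinearIndependent F s ∧
        ¬ IsSplitting 2 α (Submodule.span F (Set.range s))} =
      (q ^ 4 - 1) * (q ^ 4 - q) := by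
    rw [← htot]
    rw [Nat.card_eq_fintype_card, Nat.card_eq_fintype_card, Nat.card_eq_fintype_card]
    rw [Fintype.card_congr (Equiv.subtypeSubtypeEquivSubtypeInter
        (fun s : Fin 2 → E => LinearIndependent F s)
        (fun s => IsSplitting 2 α (Submodule.span F (Set.range s)))).symm,
      Fintype.card_congr (Equiv.subtypeSubtypeEquivSubtypeInter
        (fun s : Fin 2 → E => LinearIndependent F s)
        (fun s => ¬ IsSplitting 2 α (Submodule.span F (Set.range s)))).symm]
    rw [← Fintype.card_sum]
    exact Fintype.card_congr (Equiv.sumCompl _)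
  have h4 := NS_card hdim hα
  set A := Nat.card {W : Submodule F E // Module.finrank F W = 2 ∧ IsSplitting 2 α W} with hA
  set Bn := Nat.card {W : Submodule F E // Module.finrank F W = 2 ∧ ¬ IsSplitting 2 α W} with hB
  rw [h1, h2] at hpart
  -- arithmetic
  have hdiv : (q ^ 4 - 1) / (q ^ 2 - 1) = q ^ 2 + 1 := by
    rw [show q ^ 4 - 1 = (q ^ 2 + 1) * (q ^ 2 - 1) by zify [e2, e4]; ring]
    exact Nat.mul_div_cancel _ (by omega)
  rw [hdiv]
  have hpos : 0 < (q ^ 2 - 1) * (q ^ 2 - q) * (q - 1) := by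
    have : 0 < q ^ 2 - 1 := by omega
    have h2' : 0 < q ^ 2 - q := by omega
    have : 0 < q - 1 := by omega
    positivity
  apply Nat.eq_of_mul_eq_mul_right hpos
  have key : A * ((q ^ 2 - 1) * (q ^ 2 - q) * (q - 1)) + (q ^ 4 - 1) * ((q ^ 2 - 1) * (q ^ 2 - q))
      = (q ^ 4 - 1) * (q ^ 4 - q) * (q - 1) := by
    have := congrArg (· * (q - 1)) hpart
    simp only [add_mul] at this
    calc A * ((q ^ 2 - 1) * (q ^ 2 - q) * (q - 1)) +
          (q ^ 4 - 1) * ((q ^ 2 - 1) * (q ^ 2 - q))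
        = A * ((q ^ 2 - 1) * (q ^ 2 - q)) * (q - 1) +
          Bn * (q - 1) * ((q ^ 2 - 1) * (q ^ 2 - q)) := by rw [h4]; ring
      _ = A * ((q ^ 2 - 1) * (q ^ 2 - q)) * (q - 1) +
          Bn * ((q ^ 2 - 1) * (q ^ 2 - q)) * (q - 1) := by ring
      _ = (q ^ 4 - 1) * (q ^ 4 - q) * (q - 1) := this
  have key2 : (q ^ 2 * (q ^ 2 + 1)) * ((q ^ 2 - 1) * (q ^ 2 - q) * (q - 1)) +
      (q ^ 4 - 1) * ((q ^ 2 - 1) * (q ^ 2 - q))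
      = (q ^ 4 - 1) * (q ^ 4 - q) * (q - 1) := by
    zify [e1, e2, e4, eq2, eq4]
    ring
  exact Nat.add_right_cancel (key.trans key2.symm)
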